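/- Let H be the block Hermitian matrix [[0, γI, 0, 0],[γI, 0, A, 0],[0, A†, 0, γI],[0, 0, γI, 0]] built from an m×n matrix A with singular values λₙ, and |b⟩ ∈ ℂᵐ a unit vector. Then (⟨4| ⊗ I) e^{−iHt} (|1⟩ ⊗ |b⟩) = Σₙ αₙ ⟨ηₙ|b⟩ |λₙ⟩, where αₙ = (1/2)(⟨+|e^{−i hₙ₊ t}|+⟩ − ⟨+|e^{−i hₙ₋ t}|+⟩) with hₙ± = [[0, γ],[γ, ±λₙ]] and |+⟩ the first basis vector of ℂ². (Here {|ηₙ⟩} and {|λₙ⟩} are the left and right singular vector orthonormal bases of A.) -/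

import Mathlib

open Matrix Complex
open scoped Nat

private lemma elim_smul {A B : Type*} (c : ℂ) (x : A → ℂ) (y : B → ℂ) :
    c • Sum.elim x y = Sum.elim (c • x) (c • y) := by
  funext z; cases z <;> rfl

private lemma elim_add {A B : Type*} (x x' : A → ℂ) (y y' : B → ℂ) :
    Sum.elim x y + Sum.elim x' y' = Sum.elim (x + x') (y + y') := by
  funext z; cases z <;> rfl

private lemma exp_intertwine {N K : Type*} [Fintype N] [DecidableEq N] [Fintype K] [DecidableEq K]
    (M : Matrix N N ℂ) (h : Matrix K K ℂ) (P : Matrix N K ℂ) (hMP : M * P = P * h) :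
    NormedSpace.exp M * P = P * NormedSpace.exp h := by
  letI : NormedRing (Matrix N N ℂ) := Matrix.linftyOpNormedRing
  letI : NormedAlgebra ℂ (Matrix N N ℂ) := Matrix.linftyOpNormedAlgebra
  letI : NormedRing (Matrix K K ℂ) := Matrix.linftyOpNormedRing
  letI : NormedAlgebra ℂ (Matrix K K ℂ) := Matrix.linftyOpNormedAlgebra
  letI : NormedAddCommGroup (Matrix N K ℂ) := Matrix.linftyOpNormedAddCommGroup
  letI : NormedSpace ℂ (Matrix N K ℂ) := Matrix.linftyOpNormedSpace
  have hpow : ∀ m : ℕ, M ^ m * P = P * h ^ m := by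
    intro m
    induction m with
    | zero => simp
    | succ m ih =>
      rw [pow_succ, pow_succ, Matrix.mul_assoc, hMP, ← Matrix.mul_assoc, ih, Matrix.mul_assoc]
  let f : Matrix N N ℂ →ₗ[ℂ] Matrix N K ℂ :=
    { toFun := fun X => X * P
      map_add' := fun x y => Matrix.add_mul x y P
      map_smul' := fun c x => Matrix.smul_mul c x P }
  let g : Matrix K K ℂ →ₗ[ℂ] Matrix N K ℂ :=
    { toFun := fun Y => P * Y
      map_add' := fun x y => Matrix.mul_add P x y
      map_smul' := fun c x => Matrix.mul_smul P c x }
  let fc := LinearMap.toContinuousLinearMap f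
  let gc := LinearMap.toContinuousLinearMap g
  have hsM : Summable fun m : ℕ => (m ! : ℂ)⁻¹ • M ^ m := NormedSpace.expSeries_summable' M
  have hsh : Summable fun m : ℕ => (m ! : ℂ)⁻¹ • h ^ m := NormedSpace.expSeries_summable' h
  calc NormedSpace.exp M * P = fc (∑' (m : ℕ), (m ! : ℂ)⁻¹ • M ^ m) := by
        rw [NormedSpace.exp_eq_tsum ℂ]; rfl
    _ = ∑' (m : ℕ), fc ((m ! : ℂ)⁻¹ • M ^ m) := fc.map_tsum hsM
    _ = ∑' (m : ℕ), gc ((m ! : ℂ)⁻¹ • h ^ m) := by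
        refine tsum_congr fun m => ?_
        show ((m ! : ℂ)⁻¹ • M ^ m) * P = P * ((m ! : ℂ)⁻¹ • h ^ m)
        rw [Matrix.smul_mul, Matrix.mul_smul, hpow]
    _ = gc (∑' (m : ℕ), (m ! : ℂ)⁻¹ • h ^ m) := (gc.map_tsum hsh).symm
    _ = P * NormedSpace.exp h := by rw [NormedSpace.exp_eq_tsum ℂ]; rfl

private lemma exp_two_vec {N : Type*} [Fintype N] [DecidableEq N]
    (M : Matrix N N ℂ) (h : Matrix (Fin 2) (Fin 2) ℂ) (v0 v1 : N → ℂ)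
    (h0 : M.mulVec v0 = h 0 0 • v0 + h 1 0 • v1)
    (h1 : M.mulVec v1 = h 0 1 • v0 + h 1 1 • v1) :
    (NormedSpace.exp M).mulVec v0 =
      (NormedSpace.exp h) 0 0 • v0 + (NormedSpace.exp h) 1 0 • v1 := by
  set P : Matrix N (Fin 2) ℂ := Matrix.of fun x i => ![v0 x, v1 x] i with hPdef
  have hMP : M * P = P * h := by
    ext x i
    rw [Matrix.mul_apply, Matrix.mul_apply]
    fin_cases i
    · have := congrFun h0 x
      simp only [Matrix.mulVec, dotProduct, Pi.add_apply, Pi.smul_apply,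
        smul_eq_mul] at this
      simpa [P, Fin.sum_univ_two, mul_comm] using this
    · have := congrFun h1 x
      simp only [Matrix.mulVec, dotProduct, Pi.add_apply, Pi.smul_apply,
        smul_eq_mul] at this
      simpa [P, Fin.sum_univ_two, mul_comm] using this
  have key := exp_intertwine M h P hMP
  funext x
  have h2 := congrFun (congrFun key x) 0
  rw [Matrix.mul_apply, Matrix.mul_apply] at h2
  simp only [Fin.sum_univ_two] at h2
  simpa [P, Matrix.mulVec, dotProduct, mul_comm] using h2

private lemma keylemma {N : Type*} [Fintype N] [DecidableEq N] (M : Matrix N N ℂ) (g s : ℂ)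
    (u1 u2 u3 u4 : N → ℂ)
    (h1 : M.mulVec u1 = g • u2) (h2 : M.mulVec u2 = g • u1 + s • u3)
    (h3 : M.mulVec u3 = s • u2 + g • u4) (h4 : M.mulVec u4 = g • u3) (τ : ℂ) :
    (NormedSpace.exp (τ • M)).mulVec u1 =
      (2⁻¹ : ℂ) • ((NormedSpace.exp (τ • !![0, g; g, s])) 0 0 • (u1 + u4)
        + (NormedSpace.exp (τ • !![0, g; g, s])) 1 0 • (u2 + u3)
        + (NormedSpace.exp (τ • !![0, g; g, -s])) 0 0 • (u1 - u4)
        + (NormedSpace.exp (τ • !![0, g; g, -s])) 1 0 • (u2 - u3)) := by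
  have hp := exp_two_vec (τ • M) (τ • !![0, g; g, s]) (u1 + u4) (u2 + u3) ?_ ?_
  rotate_left
  · rw [Matrix.smul_mulVec, Matrix.mulVec_add, h1, h4]
    funext x
    simp [Matrix.smul_apply]
    ring
  · rw [Matrix.smul_mulVec, Matrix.mulVec_add, h2, h3]
    funext x
    simp [Matrix.smul_apply]
    ring
  have hm := exp_two_vec (τ • M) (τ • !![0, g; g, -s]) (u1 - u4) (u2 - u3) ?_ ?_
  rotate_left
  · rw [Matrix.smul_mulVec, Matrix.mulVec_sub, h1, h4]
    funext x
    simp [Matrix.smul_apply]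
    ring
  · rw [Matrix.smul_mulVec, Matrix.mulVec_sub, h2, h3]
    funext x
    simp [Matrix.smul_apply]
    ring
  have hu : u1 = (2⁻¹ : ℂ) • ((u1 + u4) + (u1 - u4)) := by
    funext x; simp only [Pi.smul_apply, Pi.add_apply, Pi.sub_apply, smul_eq_mul]; ring
  calc (NormedSpace.exp (τ • M)).mulVec u1
      = (2⁻¹ : ℂ) • ((NormedSpace.exp (τ • M)).mulVec (u1 + u4)
          + (NormedSpace.exp (τ • M)).mulVec (u1 - u4)) := by
        conv_lhs => rw [hu]
        rw [Matrix.mulVec_smul, Matrix.mulVec_add]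
    _ = _ := by
        rw [hp, hm]
        funext x
        simp only [Pi.smul_apply, Pi.add_apply, Pi.sub_apply, smul_eq_mul]
        ring

theorem stmt16 (n : ℕ) (γ t : ℝ) (hγ : 0 < γ)
    (A : Matrix (Fin n) (Fin n) ℂ)
    (σ : Fin n → ℝ) (hσ : ∀ k, 0 < σ k)
    (η lv : Fin n → Fin n → ℂ)
    (hηON : ∀ k l, star (η k) ⬝ᵥ η l = if k = l then 1 else 0)
    (hlvON : ∀ k l, star (lv k) ⬝ᵥ lv l = if k = l then 1 else 0)
    (hsv1 : ∀ k, A.mulVec (lv k) = (σ k : ℂ) • η k)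
    (hsv2 : ∀ k, Aᴴ.mulVec (η k) = (σ k : ℂ) • lv k)
    (b : Fin n → ℂ) (hb : star b ⬝ᵥ b = 1)
    (H : Matrix ((Fin n ⊕ Fin n) ⊕ (Fin n ⊕ Fin n)) ((Fin n ⊕ Fin n) ⊕ (Fin n ⊕ Fin n)) ℂ)
    (hH : H = Matrix.fromBlocks
        (Matrix.fromBlocks 0 ((γ : ℂ) • 1) ((γ : ℂ) • 1) 0)
        (Matrix.fromBlocks 0 0 A 0)
        (Matrix.fromBlocks 0 Aᴴ 0 0)
        (Matrix.fromBlocks 0 ((γ : ℂ) • 1) ((γ : ℂ) • 1) 0))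
    (vin : (Fin n ⊕ Fin n) ⊕ (Fin n ⊕ Fin n) → ℂ)
    (hvin : vin = Sum.elim (Sum.elim b (0 : Fin n → ℂ)) (0 : Fin n ⊕ Fin n → ℂ))
    (α : Fin n → ℂ)
    (hα : ∀ k, α k = (1 / 2) *
        ((NormedSpace.exp ((-(Complex.I * t)) • !![0, (γ : ℂ); (γ : ℂ), (σ k : ℂ)])) 0 0
          - (NormedSpace.exp ((-(Complex.I * t)) • !![0, (γ : ℂ); (γ : ℂ), (-σ k : ℂ)])) 0 0)) :
    ∀ j : Fin n,
      (NormedSpace.exp ((-(Complex.I * t)) • H)).mulVec vin (Sum.inr (Sum.inr j)) =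
        ∑ k, α k * (star (η k) ⬝ᵥ b) * lv k j := by
  intro j
  try simp only [Complex.ofReal_neg] at hα
  -- Gram identity from orthonormality (completeness of the η basis)
  have hGram : ∀ i j' : Fin n, ∑ k, star (η k i) * η k j' = if i = j' then 1 else 0 := by
    have hG : (Matrix.of fun k i => η k i) * (Matrix.of fun k i => η k i)ᴴ = 1 := by
      ext k l
      rw [Matrix.mul_apply]
      simp only [Matrix.conjTranspose_apply, Matrix.of_apply, Matrix.one_apply]
      calc ∑ i, η k i * star (η l i) = star (η l) ⬝ᵥ η k := by
            simp [dotProduct, mul_comm]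
        _ = _ := by rw [hηON]; simp [eq_comm]
    have hG' := mul_eq_one_comm.mp hG
    intro i j'
    have h2 := congrFun (congrFun hG' i) j'
    rw [Matrix.mul_apply] at h2
    simpa [Matrix.conjTranspose_apply, Matrix.one_apply] using h2
  -- expand vin over the η basis
  have hvin2 : vin = ∑ k, (star (η k) ⬝ᵥ b) •
      (Sum.elim (Sum.elim (η k) 0) (Sum.elim 0 0) :
        (Fin n ⊕ Fin n) ⊕ (Fin n ⊕ Fin n) → ℂ) := by
    rw [hvin]
    funext x
    rcases x with (x | x) | (x | x) <;>
      simp only [Sum.elim_inl, Sum.elim_inr, Finset.sum_apply, Pi.smul_apply, Pi.zero_apply,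
        smul_eq_mul, mul_zero, Finset.sum_const_zero]
    · -- b x = ∑ k, (star (η k) ⬝ᵥ b) * η k x
      have hswap : ∑ k, (star (η k) ⬝ᵥ b) * η k x = ∑ i, (∑ k, star (η k i) * η k x) * b i := by
        simp only [dotProduct, Pi.star_apply, Finset.sum_mul]
        rw [Finset.sum_comm]
        exact Finset.sum_congr rfl fun i _ => Finset.sum_congr rfl fun k _ => by ring
      rw [hswap,
        show (∑ i, (∑ k, star (η k i) * η k x) * b i) = ∑ i, (if i = x then 1 else 0) * b i
          from Finset.sum_congr rfl fun i _ => by rw [hGram]]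
      simp
  -- the four basis-vector actions of H
  have hH1 : ∀ k, H.mulVec (Sum.elim (Sum.elim (η k) 0) (Sum.elim 0 0)) =
      (γ : ℂ) • (Sum.elim (Sum.elim 0 (η k)) (Sum.elim 0 0) : _ → ℂ) := by
    intro k
    rw [hH]
    simp only [Matrix.fromBlocks_mulVec, Sum.elim_comp_inl, Sum.elim_comp_inr,
      Matrix.zero_mulVec, Matrix.mulVec_zero, Matrix.smul_mulVec, Matrix.one_mulVec,
      add_zero, zero_add, smul_zero, elim_smul, elim_add]
  have hH2 : ∀ k, H.mulVec (Sum.elim (Sum.elim 0 (η k)) (Sum.elim 0 0)) =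
      (γ : ℂ) • (Sum.elim (Sum.elim (η k) 0) (Sum.elim 0 0) : _ → ℂ)
        + (σ k : ℂ) • (Sum.elim (Sum.elim 0 0) (Sum.elim (lv k) 0) : _ → ℂ) := by
    intro k
    rw [hH]
    simp only [Matrix.fromBlocks_mulVec, Sum.elim_comp_inl, Sum.elim_comp_inr,
      Matrix.zero_mulVec, Matrix.mulVec_zero, Matrix.smul_mulVec, Matrix.one_mulVec,
      hsv2, add_zero, zero_add, smul_zero, elim_smul, elim_add]
  have hH3 : ∀ k, H.mulVec (Sum.elim (Sum.elim 0 0) (Sum.elim (lv k) 0)) =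
      (σ k : ℂ) • (Sum.elim (Sum.elim 0 (η k)) (Sum.elim 0 0) : _ → ℂ)
        + (γ : ℂ) • (Sum.elim (Sum.elim 0 0) (Sum.elim 0 (lv k)) : _ → ℂ) := by
    intro k
    rw [hH]
    simp only [Matrix.fromBlocks_mulVec, Sum.elim_comp_inl, Sum.elim_comp_inr,
      Matrix.zero_mulVec, Matrix.mulVec_zero, Matrix.smul_mulVec, Matrix.one_mulVec,
      hsv1, add_zero, zero_add, smul_zero, elim_smul, elim_add]
  have hH4 : ∀ k, H.mulVec (Sum.elim (Sum.elim 0 0) (Sum.elim 0 (lv k))) =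
      (γ : ℂ) • (Sum.elim (Sum.elim 0 0) (Sum.elim (lv k) 0) : _ → ℂ) := by
    intro k
    rw [hH]
    simp only [Matrix.fromBlocks_mulVec, Sum.elim_comp_inl, Sum.elim_comp_inr,
      Matrix.zero_mulVec, Matrix.mulVec_zero, Matrix.smul_mulVec, Matrix.one_mulVec,
      add_zero, zero_add, smul_zero, elim_smul, elim_add]
  -- linearity of the evolved state
  have hlin : (NormedSpace.exp ((-(Complex.I * t)) • H)).mulVec vin
      = ∑ k, (star (η k) ⬝ᵥ b) • (NormedSpace.exp ((-(Complex.I * t)) • H)).mulVec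
          (Sum.elim (Sum.elim (η k) 0) (Sum.elim 0 0)) := by
    rw [hvin2, ← Matrix.mulVecLin_apply, map_sum]
    exact Finset.sum_congr rfl fun k _ =>
      (NormedSpace.exp ((-(Complex.I * t)) • H)).mulVecLin.map_smul _ _
  rw [hlin, Finset.sum_apply]
  refine Finset.sum_congr rfl fun k _ => ?_
  rw [Pi.smul_apply]
  have hk := keylemma H (γ : ℂ) ((σ k : ℝ) : ℂ) _ _ _ _
    (hH1 k) (hH2 k) (hH3 k) (hH4 k) (-(Complex.I * t))
  rw [congrFun hk (Sum.inr (Sum.inr j)), hα k]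
  simp only [Pi.smul_apply, Pi.add_apply, Pi.sub_apply, Sum.elim_inl, Sum.elim_inr,
    Pi.zero_apply, smul_eq_mul, zero_add, add_zero, mul_zero, zero_sub, sub_zero]
  ring
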